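/- Let (Y, B, ν, T) be a measure-preserving ergodic dynamical system and g₁,…,g_r ∈ L¹(Y,ν). Then for ν-almost every y, lim_{n→∞} (1/n^r) Σ_{0 ≤ i₁ < … < i_r ≤ n−1} g₁(T^{i₁} y) ··· g_r(T^{i_r} y) = (1/r!) ∏_{j=1}^r ∫ g_j dν. -/

import Mathlib

open Filter MeasureTheory
open scoped Classical

section MBirkSection
open Finset

namespace MBirk
set_option linter.unusedSectionVars false



lemma pow_succ_sub_pow (r : ℕ) (x : ℝ) :
    (x + 1) ^ (r + 1) - x ^ (r + 1) = ∑ k ∈ range (r + 1), (x + 1) ^ k * x ^ (r - k) := by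
  have := geom_sum₂_mul (x + 1) x (r + 1)
  simp only [Nat.add_sub_cancel, mul_one] at this
  rw [← this]
  have h : x + 1 - x = 1 := by ring
  rw [h, mul_one]

lemma pow_sub_pow_le (r : ℕ) (i : ℕ) :
    ((i : ℝ) + 1) ^ (r + 1) - (i : ℝ) ^ (r + 1) ≤ ((r : ℝ) + 1) * ((i : ℝ) + 1) ^ r := by
  rw [pow_succ_sub_pow]
  calc ∑ k ∈ range (r + 1), ((i:ℝ) + 1) ^ k * (i:ℝ) ^ (r - k)
      ≤ ∑ k ∈ range (r + 1), ((i:ℝ) + 1) ^ r := by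
        refine sum_le_sum fun k hk => ?_
        have hk' : k ≤ r := Nat.lt_succ_iff.mp (mem_range.mp hk)
        have h1 : ((i:ℝ)) ^ (r - k) ≤ ((i:ℝ) + 1) ^ (r - k) := by
          apply pow_le_pow_left₀ (by positivity); linarith
        calc ((i:ℝ) + 1) ^ k * (i:ℝ) ^ (r - k) ≤ ((i:ℝ) + 1) ^ k * ((i:ℝ)+1) ^ (r - k) := by
              apply mul_le_mul_of_nonneg_left h1 (by positivity)
          _ = ((i:ℝ) + 1) ^ r := by rw [← pow_add]; congr 1; omega
    _ = ((r : ℝ) + 1) * ((i:ℝ) + 1) ^ r := by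
        rw [sum_const, card_range]; push_cast; ring

lemma le_pow_sub_pow (r : ℕ) (i : ℕ) :
    ((r : ℝ) + 1) * (i : ℝ) ^ r ≤ ((i : ℝ) + 1) ^ (r + 1) - (i : ℝ) ^ (r + 1) := by
  rw [pow_succ_sub_pow]
  calc ((r : ℝ) + 1) * (i:ℝ) ^ r = ∑ _k ∈ range (r + 1), (i:ℝ) ^ r := by
        rw [sum_const, card_range]; push_cast; ring
    _ ≤ ∑ k ∈ range (r + 1), ((i:ℝ) + 1) ^ k * (i:ℝ) ^ (r - k) := by
        refine sum_le_sum fun k hk => ?_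
        have hk' : k ≤ r := Nat.lt_succ_iff.mp (mem_range.mp hk)
        have h1 : ((i:ℝ)) ^ k ≤ ((i:ℝ) + 1) ^ k := by
          apply pow_le_pow_left₀ (by positivity); linarith
        calc ((i:ℝ)) ^ r = (i:ℝ) ^ k * (i:ℝ) ^ (r - k) := by rw [← pow_add]; congr 1; omega
          _ ≤ ((i:ℝ) + 1) ^ k * (i:ℝ) ^ (r - k) := by
              apply mul_le_mul_of_nonneg_right h1 (by positivity)

lemma telescope_pow (r n : ℕ) (hr : 1 ≤ r) :
    ∑ i ∈ range n, (((i : ℝ) + 1) ^ r - (i : ℝ) ^ r) = (n : ℝ) ^ r := by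
  have : ∑ i ∈ range n, ((((i+1 : ℕ)) : ℝ) ^ r - ((i : ℕ) : ℝ) ^ r) = ((n:ℝ)) ^ r - ((0:ℕ):ℝ) ^ r :=
    Finset.sum_range_sub (fun i => ((i : ℕ) : ℝ) ^ r) n
  push_cast at this
  rw [this, zero_pow (by omega), sub_zero]

/-- `∑_{i<n} i^r / n^(r+1) → 1/(r+1)` -/
lemma tendsto_sum_pow_div (r : ℕ) :
    Tendsto (fun n : ℕ => (∑ i ∈ range n, (i : ℝ) ^ r) / (n : ℝ) ^ (r + 1)) atTop
      (nhds (1 / ((r : ℝ) + 1))) := by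
  have hr1 : (0:ℝ) < (r:ℝ) + 1 := by positivity
  have htel : ∀ n : ℕ, ∑ i ∈ range n, (((i : ℝ) + 1) ^ (r+1) - (i : ℝ) ^ (r+1)) = (n : ℝ) ^ (r+1) :=
    fun n => telescope_pow (r+1) n (by omega)
  have hlow : ∀ n : ℕ, ((r:ℝ) + 1) * ∑ i ∈ range n, (i : ℝ) ^ r ≤ (n : ℝ) ^ (r + 1) := by
    intro n
    rw [← htel n, mul_sum]
    exact sum_le_sum fun i _ => le_pow_sub_pow r i
  have hup : ∀ n : ℕ, (n : ℝ) ^ (r + 1) ≤ ((r:ℝ) + 1) * (∑ i ∈ range n, (i : ℝ) ^ r + (n:ℝ) ^ r) := by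
    intro n
    have h1 : ∑ i ∈ range n, (((i:ℝ)+1)^(r+1) - (i:ℝ)^(r+1)) ≤ ∑ i ∈ range n, (((r:ℝ)+1) * ((i:ℝ)+1)^r) :=
      sum_le_sum fun i _ => pow_sub_pow_le r i
    rw [htel n] at h1
    rcases Nat.eq_zero_or_pos r with hr | hr
    · subst hr
      simp only [pow_zero, sum_const, card_range, nsmul_eq_mul, mul_one, pow_one] at h1 ⊢
      push_cast at h1 ⊢
      linarith
    · have h3 : ∑ i ∈ range n, ((i:ℝ)+1)^r = ∑ i ∈ range n, (i:ℝ)^r + (n:ℝ)^r := by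
        have ht := telescope_pow r n hr
        have : ∑ i ∈ range n, ((i:ℝ)+1)^r = ∑ i ∈ range n, ((((i:ℝ)+1)^r - (i:ℝ)^r) + (i:ℝ)^r) := by
          congr 1; ext i; ring
        rw [this, sum_add_distrib, ht]; ring
      calc (n : ℝ) ^ (r + 1) ≤ ((r:ℝ)+1) * ∑ i ∈ range n, ((i:ℝ)+1)^r := by rw [mul_sum]; exact h1
        _ = ((r:ℝ)+1) * (∑ i ∈ range n, (i:ℝ)^r + (n:ℝ)^r) := by rw [h3]
  apply tendsto_of_tendsto_of_tendsto_of_le_of_le'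
    (g := fun n : ℕ => 1/((r:ℝ)+1) - 1/(n:ℝ)) (h := fun _ : ℕ => 1/((r:ℝ)+1))
  · have h0 : Tendsto (fun n : ℕ => 1/(n:ℝ)) atTop (nhds 0) := by
      simpa using tendsto_one_div_atTop_nhds_zero_nat (𝕜 := ℝ)
    simpa using (tendsto_const_nhds (x := 1/((r:ℝ)+1))).sub h0
  · exact tendsto_const_nhds
  · filter_upwards [eventually_ge_atTop 1] with n hn
    have hn0 : (0:ℝ) < (n:ℝ) := by exact_mod_cast hn
    have hnp : (0:ℝ) < (n:ℝ) ^ (r+1) := by positivity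
    rw [le_div_iff₀ hnp]
    have e1 : (1/((r:ℝ)+1) - 1/(n:ℝ)) * (n:ℝ)^(r+1) = (n:ℝ)^(r+1)/((r:ℝ)+1) - (n:ℝ)^r := by
      field_simp; ring
    have e2 : (n:ℝ)^(r+1)/((r:ℝ)+1) ≤ ∑ i ∈ range n, (i : ℝ) ^ r + (n:ℝ)^r := by
      rw [div_le_iff₀ hr1]; linarith [hup n]
    linarith
  · filter_upwards [eventually_ge_atTop 1] with n hn
    have hn0 : (0:ℝ) < (n:ℝ) := by exact_mod_cast hn
    have hnp : (0:ℝ) < (n:ℝ) ^ (r+1) := by positivity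
    rw [div_le_iff₀ hnp]
    have e1 : 1/((r:ℝ)+1) * (n:ℝ)^(r+1) = (n:ℝ)^(r+1)/((r:ℝ)+1) := by ring
    rw [e1, le_div_iff₀ hr1]
    linarith [hlow n]



lemma tendsto_div_of_bound (v w : ℕ → ℝ) (hw : Tendsto w atTop atTop)
    (h : ∀ ε : ℝ, 0 < ε → ∃ C, ∀ n, |v n| ≤ ε * w n + C) :
    Tendsto (fun n => v n / w n) atTop (nhds 0) := by
  rw [NormedAddCommGroup.tendsto_nhds_zero]
  intro ε hε
  obtain ⟨C, hC⟩ := h (ε/4) (by positivity)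
  filter_upwards [hw.eventually_ge_atTop (max 1 (4*|C|/ε))] with n hn
  have hw1 : 1 ≤ w n := le_trans (le_max_left _ _) hn
  have hw0 : (0:ℝ) < w n := by linarith
  have hC' : 4*|C| ≤ ε * w n := by
    have h1 : 4*|C|/ε ≤ w n := le_trans (le_max_right _ _) hn
    rw [div_le_iff₀ hε] at h1; linarith [mul_comm (w n) ε]
  rw [Real.norm_eq_abs, abs_div, abs_of_pos hw0, div_lt_iff₀ hw0]
  have h2 := hC n
  have h3 : C ≤ |C| := le_abs_self C
  nlinarith

lemma abs_sum_split (t s : ℕ → ℝ) (M n : ℕ) (hs : ∀ m, 0 ≤ s m)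
    (h : ∀ m, M ≤ m → m < n → |t m| ≤ s m) :
    |∑ m ∈ range n, t m| ≤ (∑ m ∈ range M, |t m|) + ∑ m ∈ range n, s m := by
  classical
  calc |∑ m ∈ range n, t m| ≤ ∑ m ∈ range n, |t m| := Finset.abs_sum_le_sum_abs _ _
    _ = (∑ m ∈ (range n).filter (fun m => m < M), |t m|)
        + ∑ m ∈ (range n).filter (fun m => ¬ m < M), |t m| :=
          (Finset.sum_filter_add_sum_filter_not _ _ _).symm
    _ ≤ (∑ m ∈ range M, |t m|) + ∑ m ∈ range n, s m := by
        apply add_le_add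
        · apply Finset.sum_le_sum_of_subset_of_nonneg
          · intro m hm
            simp only [mem_filter, mem_range] at hm ⊢
            exact hm.2
          · intro m _ _; exact abs_nonneg _
        · calc ∑ m ∈ (range n).filter (fun m => ¬ m < M), |t m|
              ≤ ∑ m ∈ (range n).filter (fun m => ¬ m < M), s m := by
                refine Finset.sum_le_sum fun m hm => ?_
                simp only [mem_filter, mem_range, not_lt] at hm
                exact h m hm.2 hm.1
            _ ≤ ∑ m ∈ range n, s m :=
                Finset.sum_le_sum_of_subset_of_nonneg (Finset.filter_subset _ _)
                  (fun m _ _ => hs m)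

lemma tendsto_pow_succ_atTop (r : ℕ) :
    Tendsto (fun n : ℕ => ((n:ℝ)+1)^(r+1)) atTop atTop := by
  apply tendsto_atTop_mono (f := fun n : ℕ => (n:ℝ))
  · intro n
    calc (n:ℝ) ≤ (n:ℝ) + 1 := by linarith
      _ ≤ ((n:ℝ)+1)^(r+1) := le_self_pow₀ (by have : (0:ℝ) ≤ (n:ℝ) := Nat.cast_nonneg n; linarith) (by omega)
  · exact tendsto_natCast_atTop_atTop

lemma tendsto_pow_atTop_nat (r : ℕ) :
    Tendsto (fun n : ℕ => (n:ℝ)^(r+1)) atTop atTop := by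
  apply tendsto_atTop_mono' atTop _ tendsto_natCast_atTop_atTop
  filter_upwards [eventually_ge_atTop 1] with n hn
  have hn1 : (1:ℝ) ≤ (n:ℝ) := by exact_mod_cast hn
  exact le_self_pow₀ (by linarith) (by omega)

lemma tendsto_ratio_pow (r : ℕ) :
    Tendsto (fun n : ℕ => ((n:ℝ)/((n:ℝ)+1))^r) atTop (nhds 1) := by
  have h : Tendsto (fun n : ℕ => (n:ℝ)/((n:ℝ)+1)) atTop (nhds 1) := by
    have h2 : Tendsto (fun n : ℕ => 1 - 1/((n:ℝ)+1)) atTop (nhds 1) := by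
      have h3 : Tendsto (fun n : ℕ => 1/((n:ℝ)+1)) atTop (nhds 0) := by
        have h4 := tendsto_one_div_atTop_nhds_zero_nat (𝕜 := ℝ).comp (tendsto_add_atTop_nat 1)
        apply h4.congr
        intro n
        simp only [Function.comp_apply]
        push_cast
        ring
      simpa using (tendsto_const_nhds (x := (1:ℝ))).sub h3
    apply h2.congr
    intro n
    have : ((n:ℝ)+1) ≠ 0 := by positivity
    field_simp
    ring
  simpa using h.pow r




noncomputable def Bs (b : ℕ → ℝ) (n : ℕ) : ℝ := ∑ i ∈ range n, b i
noncomputable def dl (r i : ℕ) : ℝ := ((i:ℝ)+1)^r - (i:ℝ)^r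

lemma dl_nonneg (r i : ℕ) : 0 ≤ dl r i := by
  have : ((i:ℝ))^r ≤ ((i:ℝ)+1)^r := pow_le_pow_left₀ (Nat.cast_nonneg i) (by linarith) r
  simp only [dl, sub_nonneg]; exact this

lemma dl_sum_le (r n : ℕ) : ∑ i ∈ range n, dl r i ≤ (n:ℝ)^r := by
  have h1 : ∑ i ∈ range n, ((((i+1:ℕ)):ℝ)^r - ((i:ℕ):ℝ)^r) = ((n:ℕ):ℝ)^r - ((0:ℕ):ℝ)^r :=
    Finset.sum_range_sub (fun i => ((i:ℕ):ℝ)^r) n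
  push_cast at h1
  have h2 : (0:ℝ) ≤ (0:ℝ)^r := pow_nonneg le_rfl r
  calc ∑ i ∈ range n, dl r i = (n:ℝ)^r - (0:ℝ)^r := by rw [← h1]; rfl
    _ ≤ (n:ℝ)^r := by linarith

lemma dl_mul_sum (r n : ℕ) :
    ∑ i ∈ range n, dl r i * ((i:ℝ)+1) = (n:ℝ)^(r+1) - ∑ i ∈ range n, (i:ℝ)^r := by
  have h1 : ∑ i ∈ range n, ((((i+1:ℕ)):ℝ)^(r+1) - ((i:ℕ):ℝ)^(r+1))
      = ((n:ℕ):ℝ)^(r+1) - ((0:ℕ):ℝ)^(r+1) :=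
    Finset.sum_range_sub (fun i => ((i:ℕ):ℝ)^(r+1)) n
  push_cast at h1
  rw [zero_pow (by omega : r+1 ≠ 0), sub_zero] at h1
  have h2 : ∀ i : ℕ, dl r i * ((i:ℝ)+1)
      = (((i:ℝ)+1)^(r+1) - (i:ℝ)^(r+1)) - (i:ℝ)^r := by
    intro i; simp only [dl]; ring
  calc ∑ i ∈ range n, dl r i * ((i:ℝ)+1)
      = ∑ i ∈ range n, ((((i:ℝ)+1)^(r+1) - (i:ℝ)^(r+1)) - (i:ℝ)^r) :=
        sum_congr rfl fun i _ => h2 i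
    _ = (∑ i ∈ range n, (((i:ℝ)+1)^(r+1) - (i:ℝ)^(r+1))) - ∑ i ∈ range n, (i:ℝ)^r :=
        sum_sub_distrib _ _
    _ = (n:ℝ)^(r+1) - ∑ i ∈ range n, (i:ℝ)^r := by rw [h1]

lemma cesaro_shift (b : ℕ → ℝ) (c : ℝ)
    (hb : Tendsto (fun n : ℕ => (∑ i ∈ range n, b i) / n) atTop (nhds c)) :
    Tendsto (fun n : ℕ => Bs b (n+1) / ((n:ℝ)+1)) atTop (nhds c) := by
  have h := (tendsto_add_atTop_iff_nat 1).mpr hb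
  apply h.congr
  intro n
  simp only [Bs]
  push_cast
  rfl

lemma parts_identity (r : ℕ) (b : ℕ → ℝ) (n : ℕ) :
    ∑ i ∈ range (n+1), b i * (i:ℝ)^r
      = (n:ℝ)^r * Bs b (n+1) - ∑ i ∈ range n, dl r i * Bs b (i+1) := by
  have h0 := Finset.sum_range_by_parts (fun i : ℕ => ((i:ℕ):ℝ)^r) b (n+1)
  simp only [smul_eq_mul, Nat.add_sub_cancel] at h0
  push_cast at h0
  calc ∑ i ∈ range (n+1), b i * (i:ℝ)^r = ∑ i ∈ range (n+1), (i:ℝ)^r * b i :=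
        sum_congr rfl fun i _ => mul_comm _ _
    _ = (n:ℝ)^r * Bs b (n+1) - ∑ i ∈ range n, dl r i * Bs b (i+1) := by
        rw [h0]; simp only [Bs, dl]




lemma tendsto_weighted_cesaro (r : ℕ) (b : ℕ → ℝ) (c : ℝ)
    (hb : Tendsto (fun n : ℕ => (∑ i ∈ range n, b i) / n) atTop (nhds c)) :
    Tendsto (fun n : ℕ => (∑ i ∈ range n, b i * (i:ℝ)^r) / (n:ℝ)^(r+1)) atTop
      (nhds (c / ((r:ℝ)+1))) := by
  have hBs := cesaro_shift b c hb
  have hq1 : Tendsto (fun n : ℕ => ((n:ℝ)^r * Bs b (n+1)) / ((n:ℝ)+1)^(r+1)) atTop (nhds c) := by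
    have h := hBs.mul (tendsto_ratio_pow r)
    rw [mul_one] at h
    apply h.congr
    intro n
    have hne : ((n:ℝ)+1) ≠ 0 := by positivity
    rw [div_pow]
    field_simp
    ring
  have hq3 : Tendsto (fun n : ℕ => (c * (n:ℝ)^(r+1)) / ((n:ℝ)+1)^(r+1)) atTop (nhds c) := by
    have h := (tendsto_ratio_pow (r+1)).const_mul c
    rw [mul_one] at h
    apply h.congr
    intro n
    rw [div_pow, mul_div_assoc]
  have hq4 : Tendsto (fun n : ℕ => (c * ∑ i ∈ range n, (i:ℝ)^r) / ((n:ℝ)+1)^(r+1)) atTop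
      (nhds (c/((r:ℝ)+1))) := by
    have h := ((tendsto_sum_pow_div r).const_mul c).mul (tendsto_ratio_pow (r+1))
    rw [mul_one] at h
    have hval : c * (1/((r:ℝ)+1)) = c/((r:ℝ)+1) := by ring
    rw [hval] at h
    apply h.congr'
    filter_upwards [eventually_ge_atTop 1] with n hn
    have hn0 : (0:ℝ) < (n:ℝ) := by exact_mod_cast hn
    have hne : ((n:ℝ)+1) ≠ 0 := by positivity
    rw [div_pow]
    field_simp
  have hq2 : Tendsto (fun n : ℕ =>
      (∑ i ∈ range n, dl r i * (Bs b (i+1) - c*((i:ℝ)+1))) / ((n:ℝ)+1)^(r+1)) atTop (nhds 0) := by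
    apply tendsto_div_of_bound _ _ (tendsto_pow_succ_atTop r)
    intro ε hε
    obtain ⟨M, hM⟩ := Metric.tendsto_atTop.mp hBs ε hε
    refine ⟨∑ i ∈ range M, |dl r i * (Bs b (i+1) - c*((i:ℝ)+1))|, fun n => ?_⟩
    have key := abs_sum_split (fun i => dl r i * (Bs b (i+1) - c*((i:ℝ)+1)))
        (fun i => dl r i * (ε * (n:ℝ))) M n
        (fun m => mul_nonneg (dl_nonneg r m) (by positivity))
        ?_
    · have hs2 : ∑ i ∈ range n, dl r i * (ε * (n:ℝ)) = (∑ i ∈ range n, dl r i) * (ε * (n:ℝ)) :=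
        (sum_mul _ _ _).symm
      have hs3 : (∑ i ∈ range n, dl r i) * (ε * (n:ℝ)) ≤ (n:ℝ)^r * (ε * (n:ℝ)) := by
        apply mul_le_mul_of_nonneg_right (dl_sum_le r n) (by positivity)
      have hs4 : (n:ℝ)^r * (ε * (n:ℝ)) ≤ ε * ((n:ℝ)+1)^(r+1) := by
        have h5 : (n:ℝ)^r * (n:ℝ) = (n:ℝ)^(r+1) := by ring
        have h6 : (n:ℝ)^(r+1) ≤ ((n:ℝ)+1)^(r+1) :=
          pow_le_pow_left₀ (Nat.cast_nonneg n) (by linarith) (r+1)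
        calc (n:ℝ)^r * (ε * (n:ℝ)) = ε * ((n:ℝ)^r * (n:ℝ)) := by ring
          _ = ε * (n:ℝ)^(r+1) := by rw [h5]
          _ ≤ ε * ((n:ℝ)+1)^(r+1) := by apply mul_le_mul_of_nonneg_left h6 (le_of_lt hε)
      calc |∑ i ∈ range n, dl r i * (Bs b (i+1) - c*((i:ℝ)+1))|
          ≤ (∑ i ∈ range M, |dl r i * (Bs b (i+1) - c*((i:ℝ)+1))|)
            + ∑ i ∈ range n, dl r i * (ε * (n:ℝ)) := key
        _ ≤ ε * ((n:ℝ)+1)^(r+1) + ∑ i ∈ range M, |dl r i * (Bs b (i+1) - c*((i:ℝ)+1))| := by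
            rw [hs2] at *
            linarith
    · intro m hMm hmn
      have hm1 : (0:ℝ) < (m:ℝ)+1 := by positivity
      have e1 : Bs b (m+1) - c*((m:ℝ)+1) = (Bs b (m+1)/((m:ℝ)+1) - c) * ((m:ℝ)+1) := by
        rw [sub_mul, div_mul_cancel₀ _ (ne_of_gt hm1)]
      have e2 : |Bs b (m+1)/((m:ℝ)+1) - c| ≤ ε := by
        have := hM m hMm
        rw [Real.dist_eq] at this
        exact le_of_lt this
      have e3 : ((m:ℝ)+1) ≤ (n:ℝ) := by
        have : (m+1 : ℕ) ≤ n := hmn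
        exact_mod_cast this
      show |dl r m * (Bs b (m+1) - c*((m:ℝ)+1))| ≤ dl r m * (ε * (n:ℝ))
      rw [abs_mul, e1, abs_mul, abs_of_pos hm1, abs_of_nonneg (dl_nonneg r m)]
      apply mul_le_mul_of_nonneg_left _ (dl_nonneg r m)
      calc |Bs b (m+1)/((m:ℝ)+1) - c| * ((m:ℝ)+1) ≤ ε * ((m:ℝ)+1) :=
            mul_le_mul_of_nonneg_right e2 (le_of_lt hm1)
        _ ≤ ε * (n:ℝ) := mul_le_mul_of_nonneg_left e3 (le_of_lt hε)
  -- assemble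
  have hdecomp : ∀ n : ℕ, (∑ i ∈ range (n+1), b i * (i:ℝ)^r) / ((n:ℝ)+1)^(r+1)
      = ((n:ℝ)^r * Bs b (n+1)) / ((n:ℝ)+1)^(r+1)
        - (∑ i ∈ range n, dl r i * (Bs b (i+1) - c*((i:ℝ)+1))) / ((n:ℝ)+1)^(r+1)
        - (c * (n:ℝ)^(r+1)) / ((n:ℝ)+1)^(r+1)
        + (c * ∑ i ∈ range n, (i:ℝ)^r) / ((n:ℝ)+1)^(r+1) := by
    intro n
    rw [← sub_div, ← sub_div, ← add_div]
    congr 1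
    have hp := parts_identity r b n
    have h2 : ∑ i ∈ range n, dl r i * Bs b (i+1)
        = (∑ i ∈ range n, dl r i * (Bs b (i+1) - c*((i:ℝ)+1)))
          + c * ((n:ℝ)^(r+1) - ∑ i ∈ range n, (i:ℝ)^r) := by
      have h3 : ∀ i : ℕ, dl r i * Bs b (i+1)
          = dl r i * (Bs b (i+1) - c*((i:ℝ)+1)) + c * (dl r i * ((i:ℝ)+1)) := fun i => by ring
      rw [sum_congr rfl fun i _ => h3 i, sum_add_distrib, ← mul_sum, dl_mul_sum]
    rw [hp, h2]
    ring
  have haux : Tendsto (fun n : ℕ =>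
      (∑ i ∈ range (n+1), b i * (i:ℝ)^r) / ((n:ℝ)+1)^(r+1)) atTop (nhds (c/((r:ℝ)+1))) := by
    have h := ((hq1.sub hq2).sub hq3).add hq4
    have hval : c - 0 - c + c/((r:ℝ)+1) = c/((r:ℝ)+1) := by ring
    rw [hval] at h
    apply h.congr
    intro n
    exact (hdecomp n).symm
  rw [← tendsto_add_atTop_iff_nat 1]
  apply haux.congr
  intro n
  push_cast
  rfl




/-- Key kernel lemma: weighted sums against a sequence `φ m ~ C m^r`. -/
lemma tendsto_kernel (r : ℕ) (b : ℕ → ℝ) (c K : ℝ)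
    (hb : Tendsto (fun n : ℕ => (∑ i ∈ range n, b i) / n) atTop (nhds c))
    (habs : ∀ n : ℕ, ∑ i ∈ range n, |b i| ≤ K * n)
    (φ : ℕ → ℝ) (C : ℝ)
    (hφ : Tendsto (fun m : ℕ => φ m / (m:ℝ)^r) atTop (nhds C)) :
    Tendsto (fun n : ℕ => (∑ m ∈ range n, b m * φ m) / (n:ℝ)^(r+1)) atTop
      (nhds (c * C / ((r:ℝ)+1))) := by
  have hK0 : 0 ≤ K := by
    have h1 := habs 1
    have h2 : (0:ℝ) ≤ ∑ i ∈ range 1, |b i| := sum_nonneg fun i _ => abs_nonneg _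
    simpa using le_trans h2 h1
  have hfirst : Tendsto (fun n : ℕ =>
      (∑ m ∈ range n, b m * (φ m - C * (m:ℝ)^r)) / (n:ℝ)^(r+1)) atTop (nhds 0) := by
    apply tendsto_div_of_bound _ _ (tendsto_pow_atTop_nat r)
    intro ε hε
    have hε' : 0 < ε / (K + 1) := by positivity
    obtain ⟨M₀, hM₀⟩ := Metric.tendsto_atTop.mp hφ (ε/(K+1)) hε'
    set M := max M₀ 1 with hM
    refine ⟨∑ m ∈ range M, |b m * (φ m - C * (m:ℝ)^r)|, fun n => ?_⟩
    have key := abs_sum_split (fun m => b m * (φ m - C * (m:ℝ)^r))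
        (fun m => |b m| * (ε/(K+1) * (n:ℝ)^r)) M n
        (fun m => mul_nonneg (abs_nonneg _) (by positivity)) ?_
    · have hs2 : ∑ m ∈ range n, |b m| * (ε/(K+1) * (n:ℝ)^r)
          = (∑ m ∈ range n, |b m|) * (ε/(K+1) * (n:ℝ)^r) := (sum_mul _ _ _).symm
      have hs3 : (∑ m ∈ range n, |b m|) * (ε/(K+1) * (n:ℝ)^r) ≤ (K * n) * (ε/(K+1) * (n:ℝ)^r) :=
        mul_le_mul_of_nonneg_right (habs n) (by positivity)
      have hs4 : (K * n) * (ε/(K+1) * (n:ℝ)^r) ≤ ε * (n:ℝ)^(r+1) := by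
        have e1 : (K * n) * (ε/(K+1) * (n:ℝ)^r) = (K/(K+1)) * (ε * (n:ℝ)^(r+1)) := by
          have : (K+1) ≠ 0 := by positivity
          field_simp
          ring
        rw [e1]
        have e2 : K/(K+1) ≤ 1 := by
          rw [div_le_one (by positivity)]; linarith
        have e3 : 0 ≤ ε * (n:ℝ)^(r+1) := by positivity
        nlinarith
      calc |∑ m ∈ range n, b m * (φ m - C * (m:ℝ)^r)|
          ≤ (∑ m ∈ range M, |b m * (φ m - C * (m:ℝ)^r)|)
            + ∑ m ∈ range n, |b m| * (ε/(K+1) * (n:ℝ)^r) := key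
        _ ≤ ε * (n:ℝ)^(r+1) + ∑ m ∈ range M, |b m * (φ m - C * (m:ℝ)^r)| := by
            rw [hs2]
            linarith
    · intro m hMm hmn
      have hm1 : 1 ≤ m := le_trans (le_max_right _ _) hMm
      have hm0 : (0:ℝ) < (m:ℝ) := by exact_mod_cast hm1
      have hmr : (0:ℝ) < (m:ℝ)^r := by positivity
      have e1 : φ m - C * (m:ℝ)^r = (φ m / (m:ℝ)^r - C) * (m:ℝ)^r := by
        rw [sub_mul, div_mul_cancel₀ _ (ne_of_gt hmr)]
      have e2 : |φ m / (m:ℝ)^r - C| ≤ ε/(K+1) := by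
        have := hM₀ m (le_trans (le_max_left _ _) hMm)
        rw [Real.dist_eq] at this
        exact le_of_lt this
      have e3 : (m:ℝ)^r ≤ (n:ℝ)^r :=
        pow_le_pow_left₀ (le_of_lt hm0) (by exact_mod_cast le_of_lt hmn) r
      show |b m * (φ m - C * (m:ℝ)^r)| ≤ |b m| * (ε/(K+1) * (n:ℝ)^r)
      rw [abs_mul, e1, abs_mul, abs_of_pos hmr]
      apply mul_le_mul_of_nonneg_left _ (abs_nonneg (b m))
      calc |φ m / (m:ℝ)^r - C| * (m:ℝ)^r ≤ (ε/(K+1)) * (m:ℝ)^r :=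
            mul_le_mul_of_nonneg_right e2 (le_of_lt hmr)
        _ ≤ (ε/(K+1)) * (n:ℝ)^r := mul_le_mul_of_nonneg_left e3 (by positivity)
  have hsecond : Tendsto (fun n : ℕ =>
      (C * ∑ m ∈ range n, b m * (m:ℝ)^r) / (n:ℝ)^(r+1)) atTop (nhds (c * C / ((r:ℝ)+1))) := by
    have h := (tendsto_weighted_cesaro r b c hb).const_mul C
    have hval : C * (c/((r:ℝ)+1)) = c * C / ((r:ℝ)+1) := by ring
    rw [hval] at h
    apply h.congr
    intro n
    rw [mul_div_assoc]
  have h := hfirst.add hsecond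
  rw [zero_add] at h
  apply h.congr
  intro n
  rw [← add_div]
  congr 1
  rw [mul_sum, ← sum_add_distrib]
  apply sum_congr rfl
  intro m _
  ring




noncomputable def Dset (r n : ℕ) : Finset (Fin r → ℕ) :=
  (Fintype.piFinset (fun _ : Fin r => Finset.range n)).filter StrictMono

lemma mem_Dset {r n : ℕ} {s : Fin r → ℕ} :
    s ∈ Dset r n ↔ (∀ j, s j < n) ∧ StrictMono s := by
  simp [Dset, Fintype.mem_piFinset]

lemma Dsum_succ (r n : ℕ) (a : Fin (r+1) → ℕ → ℝ) :
    ∑ s ∈ Dset (r+1) n, ∏ j, a j (s j)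
      = ∑ m ∈ range n, a (Fin.last r) m *
          ∑ s ∈ Dset r m, ∏ j : Fin r, a j.castSucc (s j) := by
  have hrhs : ∑ m ∈ range n, a (Fin.last r) m * ∑ s ∈ Dset r m, ∏ j : Fin r, a j.castSucc (s j)
      = ∑ x ∈ (range n).sigma (fun m => Dset r m),
          a (Fin.last r) x.1 * ∏ j : Fin r, a j.castSucc (x.2 j) := by
    rw [Finset.sum_sigma]
    apply sum_congr rfl
    intro m _
    rw [mul_sum]
  rw [hrhs]
  refine Finset.sum_bij' (fun s _ => (⟨s (Fin.last r), Fin.init s⟩ : Σ _ : ℕ, Fin r → ℕ))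
    (fun x _ => Fin.snoc x.2 x.1) ?hi ?hj ?li ?ri ?hv
  case hi =>
    intro s hs
    rw [mem_Dset] at hs
    rw [Finset.mem_sigma, mem_range, mem_Dset]
    refine ⟨hs.1 _, fun j => ?_, ?_⟩
    · exact hs.2 (Fin.castSucc_lt_last j)
    · exact hs.2.comp Fin.strictMono_castSucc
  case hj =>
    intro x hx
    rw [Finset.mem_sigma, mem_range, mem_Dset] at hx
    rw [mem_Dset]
    beta_reduce
    constructor
    · intro j
      refine Fin.lastCases ?_ ?_ j
      · rw [Fin.snoc_last]; exact hx.1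
      · intro i; rw [Fin.snoc_castSucc]; exact lt_trans (hx.2.1 i) hx.1
    · rw [Fin.strictMono_iff_lt_succ]
      intro i
      rcases Fin.eq_castSucc_or_eq_last i.succ with ⟨j, hj⟩ | hj
      · rw [hj, Fin.snoc_castSucc, Fin.snoc_castSucc]
        apply hx.2.2
        have : i.castSucc < i.succ := Fin.castSucc_lt_succ
        rw [hj] at this
        exact Fin.castSucc_lt_castSucc_iff.mp this
      · rw [hj, Fin.snoc_last, Fin.snoc_castSucc]
        exact hx.2.1 i
  case li =>
    intro s _
    exact Fin.snoc_init_self s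
  case ri =>
    intro x _
    refine Sigma.ext ?_ ?_
    · simp [Fin.snoc_last]
    · simp [Fin.init_snoc]
  case hv =>
    intro s _
    rw [Fin.prod_univ_castSucc]
    exact mul_comm _ _

lemma det_multiple (r : ℕ) (a : Fin r → ℕ → ℝ) (c : Fin r → ℝ)
    (hc : ∀ j, Tendsto (fun n : ℕ => (∑ i ∈ range n, a j i) / n) atTop (nhds (c j)))
    (hK : ∀ j, ∃ K, ∀ n : ℕ, ∑ i ∈ range n, |a j i| ≤ K * n) :
    Tendsto (fun n : ℕ => (∑ s ∈ Dset r n, ∏ j, a j (s j)) / (n:ℝ)^r) atTop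
      (nhds ((∏ j, c j) / (Nat.factorial r : ℝ))) := by
  induction r with
  | zero =>
    have hone : ∀ n : ℕ, ∑ s ∈ Dset 0 n, ∏ j, a j (s j) = 1 := by
      intro n
      have hmem : (fun i : Fin 0 => i.elim0) ∈ Dset 0 n := by
        rw [mem_Dset]
        exact ⟨fun j => j.elim0, fun x => x.elim0⟩
      have hsub : ∀ s ∈ Dset 0 n, s = (fun i : Fin 0 => i.elim0) :=
        fun s _ => funext fun i => i.elim0
      rw [Finset.eq_singleton_iff_unique_mem.mpr ⟨hmem, hsub⟩, Finset.sum_singleton]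
      simp
    have : (fun n : ℕ => (∑ s ∈ Dset 0 n, ∏ j, a j (s j)) / (n:ℝ)^0)
        = fun _ : ℕ => (1:ℝ) := by
      funext n; rw [hone n]; simp
    rw [this]
    simpa using tendsto_const_nhds
  | succ r ih =>
    obtain ⟨K, hKb⟩ := hK (Fin.last r)
    have hIH := ih (fun j => a j.castSucc) (fun j => c j.castSucc)
      (fun j => hc _) (fun j => hK _)
    have hker := tendsto_kernel r (a (Fin.last r)) (c (Fin.last r)) K (hc _) hKb
        (fun m => ∑ s ∈ Dset r m, ∏ j : Fin r, a j.castSucc (s j))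
        ((∏ j : Fin r, c j.castSucc) / (Nat.factorial r : ℝ)) hIH
    have hval : c (Fin.last r) * ((∏ j : Fin r, c j.castSucc) / (Nat.factorial r : ℝ)) / ((r:ℝ)+1)
        = (∏ j : Fin (r+1), c j) / (Nat.factorial (r+1) : ℝ) := by
      rw [Fin.prod_univ_castSucc (f := c), Nat.factorial_succ]
      have h1 : ((Nat.factorial r : ℝ)) ≠ 0 := Nat.cast_ne_zero.mpr (Nat.factorial_ne_zero r)
      push_cast
      field_simp
    rw [hval] at hker
    apply hker.congr
    intro n
    congr 1
    exact (Dsum_succ r n a).symm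





set_option linter.unusedSectionVars false
variable {Y : Type*} [MeasurableSpace Y] {ν : Measure Y} {T : Y → Y} {f : Y → ℝ}

noncomputable def maxS (T : Y → Y) (f : Y → ℝ) : ℕ → Y → ℝ
  | 0 => fun _ => 0
  | (N+1) => fun y => max (maxS T f N y) (∑ i ∈ range (N+1), f (T^[i] y))

lemma S_succ' (n : ℕ) (y : Y) :
    ∑ i ∈ range (n+1), f (T^[i] y) = f y + ∑ i ∈ range n, f (T^[i] (T y)) := by
  rw [Finset.sum_range_succ']
  simp only [Function.iterate_zero_apply, Function.iterate_succ_apply]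
  ring

lemma maxS_nonneg (N : ℕ) (y : Y) : 0 ≤ maxS T f N y := by
  induction N with
  | zero => simp [maxS]
  | succ N ih => exact le_trans ih (le_max_left _ _)

lemma maxS_mono (N : ℕ) (y : Y) : maxS T f N y ≤ maxS T f (N+1) y := le_max_left _ _

lemma le_maxS (n N : ℕ) (hn : n ≤ N) (y : Y) :
    ∑ i ∈ range n, f (T^[i] y) ≤ maxS T f N y := by
  induction N with
  | zero =>
    interval_cases n
    simp [maxS]
  | succ N ih =>
    rcases Nat.lt_succ_iff_lt_or_eq.mp (Nat.lt_succ_of_le hn) with h | h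
    · exact le_trans (ih (by omega)) (le_max_left _ _)
    · subst h; exact le_max_right _ _

lemma maxS_key (N : ℕ) (y : Y) :
    maxS T f N y ≤ max 0 (f y + maxS T f N (T y)) := by
  induction N with
  | zero => simp [maxS]
  | succ N ih =>
    rw [maxS]
    apply max_le
    · exact le_trans ih (max_le_max le_rfl (add_le_add_right (le_max_left _ _) (f y)))
    · rw [S_succ']
      have h1 : ∑ i ∈ range N, f (T^[i] (T y)) ≤ maxS T f (N+1) (T y) :=
        le_maxS N (N+1) (by omega) (T y)
      exact le_trans (by linarith) (le_max_right 0 (f y + maxS T f (N+1) (T y)))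

lemma maxS_measurable (hT : Measurable T) (hfm : Measurable f) (N : ℕ) :
    Measurable (maxS T f N) := by
  induction N with
  | zero => simpa [maxS] using measurable_const
  | succ N ih =>
    apply Measurable.max ih
    apply Finset.measurable_sum
    intro i _
    exact hfm.comp (hT.iterate i)

lemma S_integrable (hT : MeasurePreserving T ν ν) (hfi : Integrable f ν) (n : ℕ) :
    Integrable (fun y => ∑ i ∈ range n, f (T^[i] y)) ν := by
  apply integrable_finset_sum
  intro i _
  exact ((hT.iterate i).integrable_comp hfi.aestronglyMeasurable).mpr hfi

lemma maxS_integrable (hT : MeasurePreserving T ν ν) (hfi : Integrable f ν) (N : ℕ) :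
    Integrable (maxS T f N) ν := by
  induction N with
  | zero => simpa [maxS] using integrable_zero Y ℝ ν
  | succ N ih =>
    have h2 := S_integrable hT hfi (N+1)
    have := ih.sup h2
    apply this.congr
    filter_upwards with y
    rfl

/-- **Maximal ergodic theorem** -/
lemma maximal_ergodic (hT : MeasurePreserving T ν ν) (hfm : Measurable f)
    (hfi : Integrable f ν) :
    0 ≤ ∫ y in {y | ∃ n, 1 ≤ n ∧ 0 < ∑ i ∈ range n, f (T^[i] y)}, f y ∂ν := by
  set E : ℕ → Set Y := fun N => {y | 0 < maxS T f N y} with hE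
  have hEmeas : ∀ N, MeasurableSet (E N) :=
    fun N => measurableSet_lt measurable_const (maxS_measurable hT.measurable hfm N)
  have hEmono : Monotone E := by
    intro N M hNM y hy
    simp only [hE, Set.mem_setOf_eq] at hy ⊢
    have : maxS T f N y ≤ maxS T f M y := by
      clear hy
      induction M with
      | zero => rw [Nat.le_zero.mp hNM]
      | succ M ih =>
        rcases Nat.lt_succ_iff_lt_or_eq.mp (Nat.lt_succ_of_le hNM) with h | h
        · exact le_trans (ih (by omega)) (maxS_mono M y)
        · subst h; rfl
    linarith
  have hEunion : (⋃ N, E N) = {y | ∃ n, 1 ≤ n ∧ 0 < ∑ i ∈ range n, f (T^[i] y)} := by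
    ext y
    simp only [Set.mem_iUnion, hE, Set.mem_setOf_eq]
    constructor
    · rintro ⟨N, hN⟩
      induction N with
      | zero => simp [maxS] at hN
      | succ N ih =>
        rw [maxS] at hN
        rcases lt_max_iff.mp hN with h | h
        · exact ih h
        · exact ⟨N+1, by omega, h⟩
    · rintro ⟨n, hn1, hn⟩
      exact ⟨n, lt_of_lt_of_le hn (le_maxS n n le_rfl y)⟩
  -- Garsia's argument
  have hstep : ∀ N, 0 ≤ ∫ y in E N, f y ∂ν := by
    intro N
    have hMi := maxS_integrable hT hfi N
    have hMiT : Integrable (maxS T f N ∘ T) ν :=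
      (hT.integrable_comp hMi.aestronglyMeasurable).mpr hMi
    have key : ∀ y ∈ E N, maxS T f N y - maxS T f N (T y) ≤ f y := by
      intro y hy
      simp only [hE, Set.mem_setOf_eq] at hy
      have h1 := maxS_key (T := T) (f := f) N y
      rcases max_cases 0 (f y + maxS T f N (T y)) with ⟨h2, _⟩ | ⟨h2, _⟩ <;>
        rw [h2] at h1 <;> linarith
    have h1 : ∫ y in E N, (maxS T f N y - maxS T f N (T y)) ∂ν ≤ ∫ y in E N, f y ∂ν := by
      apply setIntegral_mono_on ((hMi.sub hMiT).integrableOn) (hfi.integrableOn) (hEmeas N) key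
    have h2 : ∫ y in E N, (maxS T f N y - maxS T f N (T y)) ∂ν
        = ∫ y in E N, maxS T f N y ∂ν - ∫ y in E N, maxS T f N (T y) ∂ν :=
      integral_sub hMi.integrableOn hMiT.integrableOn
    have h3 : ∫ y in E N, maxS T f N y ∂ν = ∫ y, maxS T f N y ∂ν := by
      apply setIntegral_eq_integral_of_forall_compl_eq_zero
      intro y hy
      simp only [hE, Set.mem_setOf_eq, not_lt] at hy
      exact le_antisymm hy (maxS_nonneg N y)
    have h4 : ∫ y in E N, maxS T f N (T y) ∂ν ≤ ∫ y, maxS T f N (T y) ∂ν := by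
      apply setIntegral_le_integral hMiT
      filter_upwards with y
      exact maxS_nonneg N (T y)
    have h5 : ∫ y, maxS T f N (T y) ∂ν = ∫ y, maxS T f N y ∂ν := by
      have hmeas := (maxS_measurable hT.measurable hfm N).aestronglyMeasurable
        (μ := Measure.map T ν)
      have := integral_map hT.measurable.aemeasurable hmeas
      rw [hT.map_eq] at this
      exact this.symm
    linarith
  -- pass to the limit
  rw [← hEunion]
  have hconv := tendsto_setIntegral_of_monotone hEmeas hEmono
    (hfi.integrableOn (s := ⋃ N, E N))
  exact ge_of_tendsto hconv (Eventually.of_forall hstep)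




set_option linter.unusedSectionVars false

/-- one-sided limsup comparison for perturbed sequences -/
lemma limsup_le_aux (v t e : ℕ → ℝ) (ht : Tendsto t atTop (nhds 1))
    (he : Tendsto e atTop (nhds 0)) :
    limsup (fun n => ((v n * t n + e n : ℝ) : EReal)) atTop
      ≤ limsup (fun n => ((v n : ℝ) : EReal)) atTop := by
  by_contra hcon
  push_neg at hcon
  obtain ⟨β, hAβ, hβB⟩ := EReal.exists_between_coe_real hcon
  obtain ⟨γ, hAγ, hγβ⟩ := EReal.exists_between_coe_real hAβ
  have hγβ' : γ < β := by exact_mod_cast hγβ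
  have hev : ∀ᶠ n in atTop, v n < γ := by
    filter_upwards [eventually_lt_of_limsup_lt hAγ] with n hn
    exact_mod_cast hn
  have htend : Tendsto (fun n => γ * t n + e n) atTop (nhds γ) := by
    have := (ht.const_mul γ).add he
    simpa using this
  have hev2 : ∀ᶠ n in atTop, γ * t n + e n < β := htend.eventually (eventually_lt_nhds hγβ')
  have hev3 : ∀ᶠ n in atTop, (0:ℝ) < t n :=
    ht.eventually (eventually_gt_nhds (by norm_num : (0:ℝ) < 1))
  have hfin : ∀ᶠ n in atTop, ((v n * t n + e n : ℝ) : EReal) ≤ (β : EReal) := by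
    filter_upwards [hev, hev2, hev3] with n h1 h2 h3
    have h4 : v n * t n ≤ γ * t n := mul_le_mul_of_nonneg_right (le_of_lt h1) (le_of_lt h3)
    have h5 : v n * t n + e n < β := by linarith
    exact_mod_cast le_of_lt h5
  have hle : limsup (fun n => ((v n * t n + e n : ℝ) : EReal)) atTop ≤ (β:EReal) :=
    limsup_le_of_le (by isBoundedDefault) hfin
  exact absurd hβB (not_lt.mpr hle)

variable {Y : Type*} [MeasurableSpace Y] {ν : Measure Y} {T : Y → Y} {f : Y → ℝ}

lemma S_succ'' (n : ℕ) (y : Y) :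
    ∑ i ∈ range (n+1), f (T^[i] y) = f y + ∑ i ∈ range n, f (T^[i] (T y)) := by
  rw [Finset.sum_range_succ']
  simp only [Function.iterate_zero_apply, Function.iterate_succ_apply]
  ring

/-- shift-invariance of the Birkhoff limsup -/
lemma birk_limsup_comp (f : Y → ℝ) (T : Y → Y) (y : Y) :
    limsup (fun n => (((∑ i ∈ range n, f (T^[i] (T y))) / n : ℝ) : EReal)) atTop
      = limsup (fun n => (((∑ i ∈ range n, f (T^[i] y)) / n : ℝ) : EReal)) atTop := by
  set u : ℕ → ℝ := fun n => ∑ i ∈ range n, f (T^[i] y) with hu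
  have hSshift : ∀ n, ∑ i ∈ range n, f (T^[i] (T y)) = u (n+1) - f y := by
    intro n
    have h := S_succ'' (f := f) (T := T) n y
    simp only [hu]
    linarith
  set w : ℕ → ℝ := fun n => u (n+1) / ((n:ℝ)+1) with hw
  set L : ℕ → ℝ := fun n => (u (n+1) - f y) / (n:ℝ) with hL
  have hLfun : (fun n : ℕ => (((∑ i ∈ range n, f (T^[i] (T y))) / n : ℝ) : EReal))
      = fun n => ((L n : ℝ) : EReal) := by
    funext n
    rw [hSshift n]
  have hR : limsup (fun n => ((u n / n : ℝ) : EReal)) atTop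
      = limsup (fun n => ((w n : ℝ) : EReal)) atTop := by
    have h := limsup_nat_add (fun n : ℕ => ((u n / n : ℝ) : EReal)) 1
    rw [← h]
    apply Filter.limsup_congr
    filter_upwards with n
    have : ((n+1 : ℕ) : ℝ) = (n:ℝ) + 1 := by push_cast; ring
    rw [hw]
    simp only []
    rw [this]
  rw [hLfun, hR]
  apply le_antisymm
  · -- limsup L ≤ limsup w
    have hid : ∀ n, L n = w n * (((n:ℝ)+1)/(n:ℝ)) + (-(f y)/(n:ℝ)) := by
      intro n
      rcases Nat.eq_zero_or_pos n with h | h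
      · subst h; simp [hL, hw]
      · have hn0 : ((n:ℝ)) ≠ 0 := by positivity
        have hn1 : ((n:ℝ)+1) ≠ 0 := by positivity
        simp only [hL, hw]
        field_simp
        ring
    have ht : Tendsto (fun n : ℕ => ((n:ℝ)+1)/(n:ℝ)) atTop (nhds 1) := by
      have h1 : Tendsto (fun n : ℕ => 1 + 1/(n:ℝ)) atTop (nhds 1) := by
        have := tendsto_one_div_atTop_nhds_zero_nat (𝕜 := ℝ)
        simpa using (tendsto_const_nhds (x := (1:ℝ))).add this
      apply h1.congr'
      filter_upwards [eventually_ge_atTop 1] with n hn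
      have hn0 : ((n:ℝ)) ≠ 0 := by
        have : (0:ℝ) < n := by exact_mod_cast hn
        positivity
      field_simp
    have he : Tendsto (fun n : ℕ => -(f y)/(n:ℝ)) atTop (nhds 0) := by
      have := tendsto_one_div_atTop_nhds_zero_nat (𝕜 := ℝ).const_mul (-(f y))
      rw [mul_zero] at this
      apply this.congr
      intro n
      ring
    have := limsup_le_aux w (fun n : ℕ => ((n:ℝ)+1)/(n:ℝ)) (fun n : ℕ => -(f y)/(n:ℝ)) ht he
    calc limsup (fun n => ((L n : ℝ) : EReal)) atTop
        = limsup (fun n => ((w n * (((n:ℝ)+1)/(n:ℝ)) + (-(f y)/(n:ℝ)) : ℝ) : EReal)) atTop := by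
          apply Filter.limsup_congr
          filter_upwards with n
          rw [hid n]
      _ ≤ limsup (fun n => ((w n : ℝ) : EReal)) atTop := this
  · -- limsup w ≤ limsup L
    have hid : ∀ n, w n = L n * ((n:ℝ)/((n:ℝ)+1)) + (f y)/((n:ℝ)+1) := by
      intro n
      rcases Nat.eq_zero_or_pos n with h | h
      · subst h
        simp only [hL, hw]
        norm_num
        have : u 1 = f y := by
          simp only [hu]
          rw [Finset.sum_range_one]
          simp
        rw [this]
      · have hn0 : ((n:ℝ)) ≠ 0 := by positivity
        have hn1 : ((n:ℝ)+1) ≠ 0 := by positivity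
        simp only [hL, hw]
        field_simp
        ring
    have ht : Tendsto (fun n : ℕ => (n:ℝ)/((n:ℝ)+1)) atTop (nhds 1) := by
      have h1 : Tendsto (fun n : ℕ => 1 - 1/((n:ℝ)+1)) atTop (nhds 1) := by
        have h2 : Tendsto (fun n : ℕ => 1/((n:ℝ)+1)) atTop (nhds 0) := by
          have h4 := tendsto_one_div_atTop_nhds_zero_nat (𝕜 := ℝ).comp (tendsto_add_atTop_nat 1)
          apply h4.congr
          intro n
          simp only [Function.comp_apply]
          push_cast
          ring
        simpa using (tendsto_const_nhds (x := (1:ℝ))).sub h2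
      apply h1.congr
      intro n
      have hn1 : ((n:ℝ)+1) ≠ 0 := by positivity
      field_simp
      ring
    have he : Tendsto (fun n : ℕ => (f y)/((n:ℝ)+1)) atTop (nhds 0) := by
      have h2 : Tendsto (fun n : ℕ => 1/((n:ℝ)+1)) atTop (nhds 0) := by
        have h4 := tendsto_one_div_atTop_nhds_zero_nat (𝕜 := ℝ).comp (tendsto_add_atTop_nat 1)
        apply h4.congr
        intro n
        simp only [Function.comp_apply]
        push_cast
        ring
      have := h2.const_mul (f y)
      rw [mul_zero] at this
      apply this.congr
      intro n
      ring
    have := limsup_le_aux L (fun n : ℕ => (n:ℝ)/((n:ℝ)+1)) (fun n : ℕ => (f y)/((n:ℝ)+1)) ht he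
    calc limsup (fun n => ((w n : ℝ) : EReal)) atTop
        = limsup (fun n => ((L n * ((n:ℝ)/((n:ℝ)+1)) + (f y)/((n:ℝ)+1) : ℝ) : EReal)) atTop := by
          apply Filter.limsup_congr
          filter_upwards with n
          rw [hid n]
      _ ≤ limsup (fun n => ((L n : ℝ) : EReal)) atTop := this




set_option linter.unusedSectionVars false

variable {Y : Type*} [MeasurableSpace Y] {ν : Measure Y} {T : Y → Y} {f : Y → ℝ}

lemma birk_limsup_le [IsProbabilityMeasure ν] (hT : Ergodic T ν) (hfm : Measurable f)
    (hfi : Integrable f ν) (α : ℝ) (hα : ∫ y, f y ∂ν < α) :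
    ∀ᵐ y ∂ν, limsup (fun n => (((∑ i ∈ range n, f (T^[i] y)) / n : ℝ) : EReal)) atTop
      ≤ (α : EReal) := by
  have hSmeas : ∀ n : ℕ, Measurable fun y => ∑ i ∈ range n, f (T^[i] y) := by
    intro n
    apply Finset.measurable_sum
    intro i _
    exact hfm.comp (hT.toMeasurePreserving.measurable.iterate i)
  set h : Y → EReal :=
    fun y => limsup (fun n => (((∑ i ∈ range n, f (T^[i] y)) / n : ℝ) : EReal)) atTop with hh
  have hmeas : Measurable h := by
    apply Measurable.limsup
    intro n
    exact measurable_coe_real_ereal.comp ((hSmeas n).div_const _)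
  set L := {y | (α:EReal) < h y} with hLdef
  have hLmeas : MeasurableSet L := measurableSet_lt measurable_const hmeas
  have hLinv : T ⁻¹' L = L := by
    ext y
    simp only [Set.mem_preimage, hLdef, Set.mem_setOf_eq, hh]
    rw [birk_limsup_comp f T y]
  rcases hT.ae_empty_or_univ hLmeas hLinv with hL0 | hL1
  · have hnull : ν L = 0 := by
      have := measure_congr hL0
      simpa using this
    have hae : ∀ᵐ y ∂ν, y ∉ L := by
      rw [ae_iff]
      convert hnull using 2
      ext y
      simp
    filter_upwards [hae] with y hy
    simp only [hLdef, Set.mem_setOf_eq, not_lt] at hy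
    exact hy
  · exfalso
    set g : Y → ℝ := fun y => f y - α with hg
    have hgi : Integrable g ν := hfi.sub (integrable_const α)
    have hgm : Measurable g := hfm.sub measurable_const
    have hmax := maximal_ergodic hT.toMeasurePreserving hgm hgi
    set E := {y | ∃ n, 1 ≤ n ∧ 0 < ∑ i ∈ range n, g (T^[i] y)} with hEdef
    have hSg : ∀ (n : ℕ) (y : Y), ∑ i ∈ range n, g (T^[i] y)
        = (∑ i ∈ range n, f (T^[i] y)) - n * α := by
      intro n y
      simp only [hg]
      rw [sum_sub_distrib, sum_const, card_range, nsmul_eq_mul]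
    have hsub : L ⊆ E := by
      intro y hy
      simp only [hLdef, Set.mem_setOf_eq, hh] at hy
      have hfreq := frequently_lt_of_lt_limsup (by isBoundedDefault) hy
      obtain ⟨n, hn1, hn⟩ := (frequently_atTop.mp hfreq) 1
      have hn' : α < (∑ i ∈ range n, f (T^[i] y)) / n := by exact_mod_cast hn
      have hnpos : (0:ℝ) < (n:ℝ) := by
        have : (1:ℕ) ≤ n := hn1
        exact_mod_cast this
      rw [lt_div_iff₀ hnpos] at hn'
      refine ⟨n, hn1, ?_⟩
      rw [hSg n y]
      linarith [mul_comm α (n:ℝ)]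
    have hEmeas : MeasurableSet E := by
      have : E = ⋃ n, ⋃ (_ : 1 ≤ n), {y | 0 < ∑ i ∈ range n, g (T^[i] y)} := by
        ext y
        simp [hEdef]
      rw [this]
      refine MeasurableSet.iUnion fun n => MeasurableSet.iUnion fun _ => ?_
      have : Measurable fun y => ∑ i ∈ range n, g (T^[i] y) := by
        apply Finset.measurable_sum
        intro i _
        exact hgm.comp (hT.toMeasurePreserving.measurable.iterate i)
      exact measurableSet_lt measurable_const this
    have hLfull : ν L = 1 := by
      have := measure_congr hL1
      simpa using this
    have hEfull : ν E = 1 := by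
      apply le_antisymm prob_le_one
      rw [← hLfull]
      exact measure_mono hsub
    have hEc : ν Eᶜ = 0 := by
      rw [prob_compl_eq_zero_iff hEmeas]
      exact hEfull
    have hint : ∫ y in E, g y ∂ν = ∫ y, g y ∂ν := by
      have := integral_add_compl hEmeas hgi
      rw [← this]
      have h0 : ∫ y in Eᶜ, g y ∂ν = 0 := by
        rw [Measure.restrict_eq_zero.mpr hEc]
        simp
      rw [h0, add_zero]
    have hneg : ∫ y, g y ∂ν < 0 := by
      simp only [hg]
      rw [integral_sub hfi (integrable_const α), integral_const]
      simp only [measure_univ, probReal_univ, ENNReal.toReal_one, smul_eq_mul, one_mul]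
      linarith
    rw [hint] at hmax
    linarith




set_option linter.unusedSectionVars false

variable {Y : Type*} [MeasurableSpace Y] {ν : Measure Y} {T : Y → Y} {f : Y → ℝ}

lemma birkhoff_measurable [IsProbabilityMeasure ν] (hT : Ergodic T ν) (hfm : Measurable f)
    (hfi : Integrable f ν) :
    ∀ᵐ y ∂ν, Tendsto (fun n : ℕ => (∑ i ∈ range n, f (T^[i] y)) / n) atTop
      (nhds (∫ y, f y ∂ν)) := by
  set c := ∫ y, f y ∂ν with hc
  have hup : ∀ᵐ y ∂ν, ∀ k : ℕ,
      limsup (fun n => (((∑ i ∈ range n, f (T^[i] y)) / n : ℝ) : EReal)) atTop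
        ≤ ((c + 1/((k:ℝ)+1) : ℝ) : EReal) := by
    rw [ae_all_iff]
    intro k
    apply birk_limsup_le hT hfm hfi
    have : (0:ℝ) < 1/((k:ℝ)+1) := by positivity
    linarith
  have hdn : ∀ᵐ y ∂ν, ∀ k : ℕ,
      limsup (fun n => (((∑ i ∈ range n, (-f) (T^[i] y)) / n : ℝ) : EReal)) atTop
        ≤ ((-c + 1/((k:ℝ)+1) : ℝ) : EReal) := by
    rw [ae_all_iff]
    intro k
    apply birk_limsup_le hT hfm.neg hfi.neg
    rw [integral_neg']
    have : (0:ℝ) < 1/((k:ℝ)+1) := by positivity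
    linarith
  filter_upwards [hup, hdn] with y h1 h2
  have hA : limsup (fun n => (((∑ i ∈ range n, f (T^[i] y)) / n : ℝ) : EReal)) atTop
      ≤ (c : EReal) := by
    by_contra hcon
    push_neg at hcon
    obtain ⟨β, h3, h4⟩ := EReal.exists_between_coe_real hcon
    have hβ : c < β := by exact_mod_cast h3
    obtain ⟨k, hk⟩ := exists_nat_one_div_lt (show (0:ℝ) < β - c by linarith)
    have h5 : ((c + 1/((k:ℝ)+1) : ℝ) : EReal) < (β : EReal) := by
      have : c + 1/((k:ℝ)+1) < β := by linarith
      exact_mod_cast this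
    exact absurd h4 (not_lt.mpr (le_of_lt (lt_of_le_of_lt (h1 k) h5)))
  have hB : limsup (fun n => ((-((∑ i ∈ range n, f (T^[i] y)) / n) : ℝ) : EReal)) atTop
      ≤ ((-c : ℝ) : EReal) := by
    have h2' : ∀ k : ℕ, limsup (fun n => ((-((∑ i ∈ range n, f (T^[i] y)) / n) : ℝ) : EReal)) atTop
        ≤ ((-c + 1/((k:ℝ)+1) : ℝ) : EReal) := by
      intro k
      have := h2 k
      have heq : (fun n : ℕ => (((∑ i ∈ range n, (-f) (T^[i] y)) / n : ℝ) : EReal))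
          = fun n : ℕ => ((-((∑ i ∈ range n, f (T^[i] y)) / n) : ℝ) : EReal) := by
        funext n
        congr 1
        rw [← neg_div]
        congr 1
        simp
      rwa [heq] at this
    by_contra hcon
    push_neg at hcon
    obtain ⟨β, h3, h4⟩ := EReal.exists_between_coe_real hcon
    have hβ : -c < β := by exact_mod_cast h3
    obtain ⟨k, hk⟩ := exists_nat_one_div_lt (show (0:ℝ) < β - (-c) by linarith)
    have h5 : ((-c + 1/((k:ℝ)+1) : ℝ) : EReal) < (β : EReal) := by
      have : -c + 1/((k:ℝ)+1) < β := by linarith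
      exact_mod_cast this
    exact absurd h4 (not_lt.mpr (le_of_lt (lt_of_le_of_lt (h2' k) h5)))
  rw [Metric.tendsto_atTop]
  intro ε hε
  have hup' : ∀ᶠ n in atTop, (∑ i ∈ range n, f (T^[i] y)) / n < c + ε := by
    have hlt : limsup (fun n => (((∑ i ∈ range n, f (T^[i] y)) / n : ℝ) : EReal)) atTop
        < ((c + ε : ℝ) : EReal) := by
      apply lt_of_le_of_lt hA
      exact_mod_cast (by linarith : c < c + ε)
    filter_upwards [eventually_lt_of_limsup_lt hlt] with n hn
    exact_mod_cast hn
  have hdn' : ∀ᶠ n in atTop, -((∑ i ∈ range n, f (T^[i] y)) / n) < -c + ε := by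
    have hlt : limsup (fun n => ((-((∑ i ∈ range n, f (T^[i] y)) / n) : ℝ) : EReal)) atTop
        < ((-c + ε : ℝ) : EReal) := by
      apply lt_of_le_of_lt hB
      exact_mod_cast (by linarith : -c < -c + ε)
    filter_upwards [eventually_lt_of_limsup_lt hlt] with n hn
    exact_mod_cast hn
  obtain ⟨N, hN⟩ := (hup'.and hdn').exists_forall_of_atTop
  exact ⟨N, fun n hn => by
    have := hN n hn
    rw [Real.dist_eq, abs_lt]
    constructor <;> linarith [this.1, this.2]⟩

theorem birkhoff_ae [IsProbabilityMeasure ν] (hT : Ergodic T ν) (hfi : Integrable f ν) :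
    ∀ᵐ y ∂ν, Tendsto (fun n : ℕ => (∑ i ∈ range n, f (T^[i] y)) / n) atTop
      (nhds (∫ y, f y ∂ν)) := by
  set f' := hfi.1.mk f with hf'
  have hf'm : Measurable f' := hfi.1.stronglyMeasurable_mk.measurable
  have heq : f =ᵐ[ν] f' := hfi.1.ae_eq_mk
  have hfi' : Integrable f' ν := hfi.congr heq
  have hcomp : ∀ i : ℕ, (fun y => f (T^[i] y)) =ᵐ[ν] (fun y => f' (T^[i] y)) := by
    intro i
    have hmp := hT.toMeasurePreserving.iterate i
    have : f =ᵐ[ν.map (T^[i])] f' := by rwa [hmp.map_eq]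
    exact MeasureTheory.ae_eq_comp hmp.measurable.aemeasurable this
  have hall : ∀ᵐ y ∂ν, ∀ i : ℕ, f (T^[i] y) = f' (T^[i] y) := ae_all_iff.mpr hcomp
  have hmain := birkhoff_measurable hT hf'm hfi'
  have hint : ∫ y, f y ∂ν = ∫ y, f' y ∂ν := integral_congr_ae heq
  rw [hint]
  filter_upwards [hmain, hall] with y h1 h2
  apply h1.congr
  intro n
  congr 1
  exact Finset.sum_congr rfl fun i _ => (h2 i).symm


lemma bound_of_cesaro (u : ℕ → ℝ) (hu : ∀ i, 0 ≤ u i) (d : ℝ)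
    (h : Tendsto (fun n : ℕ => (∑ i ∈ range n, u i) / n) atTop (nhds d)) :
    ∃ K, ∀ n : ℕ, ∑ i ∈ range n, u i ≤ K * n := by
  have hev : ∀ᶠ n in atTop, (∑ i ∈ range n, u i) / n < d + 1 :=
    h.eventually (eventually_lt_nhds (by linarith))
  obtain ⟨N, hN⟩ := eventually_atTop.mp hev
  refine ⟨max (d+1) (∑ i ∈ range N, u i), fun n => ?_⟩
  have hK0 : (0:ℝ) ≤ max (d+1) (∑ i ∈ range N, u i) :=
    le_trans (sum_nonneg fun i _ => hu i) (le_max_right _ _)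
  rcases Nat.eq_zero_or_pos n with h0 | h0
  · subst h0; simp
  rcases le_or_gt N n with hn | hn
  · have hq := hN n hn
    have hnp : (0:ℝ) < n := by exact_mod_cast h0
    rw [div_lt_iff₀ hnp] at hq
    calc ∑ i ∈ range n, u i ≤ (d+1) * n := le_of_lt hq
      _ ≤ max (d+1) (∑ i ∈ range N, u i) * n :=
          mul_le_mul_of_nonneg_right (le_max_left _ _) (le_of_lt hnp)
  · calc ∑ i ∈ range n, u i ≤ ∑ i ∈ range N, u i :=
        sum_le_sum_of_subset_of_nonneg (Finset.range_subset_range.mpr (le_of_lt hn))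
          (fun i _ _ => hu i)
      _ ≤ max (d+1) (∑ i ∈ range N, u i) := le_max_right _ _
      _ ≤ max (d+1) (∑ i ∈ range N, u i) * n := by
          have h1 : (1:ℝ) ≤ (n:ℝ) := by exact_mod_cast h0
          exact le_mul_of_one_le_right hK0 h1

lemma sum_strictmono_eq (r n : ℕ) (F : Fin r → ℕ → ℝ) :
    ∑ s ∈ Finset.univ.filter (fun s : Fin r → Fin n => StrictMono s), ∏ j, F j ((s j : ℕ))
      = ∑ s ∈ Dset r n, ∏ j, F j (s j) := by
  refine Finset.sum_bij' (fun s _ => fun j => ((s j : ℕ)))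
    (fun s hs => fun j => (⟨s j, (mem_Dset.mp hs).1 j⟩ : Fin n)) ?hi ?hj ?li ?ri ?hv
  case hi =>
    intro s hs
    rw [Finset.mem_filter] at hs
    rw [mem_Dset]
    refine ⟨fun j => (s j).isLt, fun a b hab => ?_⟩
    have := hs.2 hab
    exact_mod_cast this
  case hj =>
    intro s hs
    rw [Finset.mem_filter]
    refine ⟨Finset.mem_univ _, fun a b hab => ?_⟩
    have := (mem_Dset.mp hs).2 hab
    exact_mod_cast this
  case li =>
    intro s _
    rfl
  case ri =>
    intro s hs
    funext j
    rfl
  case hv =>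
    intro s _
    rfl

end MBirk
end MBirkSection

set_option maxHeartbeats 1000000 in
theorem multiple_birkhoff (Y : Type*) [MeasurableSpace Y]
    (ν : Measure Y) [IsProbabilityMeasure ν] (T : Y → Y) (herg : Ergodic T ν)
    (r : ℕ) (hr : 1 ≤ r) (g : Fin r → Y → ℝ) (hg : ∀ j, Integrable (g j) ν) :
    ∀ᵐ y ∂ν,
      Tendsto (fun n : ℕ =>
          (∑ s ∈ Finset.univ.filter (fun s : Fin r → Fin n => StrictMono s),
            ∏ j : Fin r, g j (T^[(s j : ℕ)] y)) / (n : ℝ) ^ r)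
        atTop
        (nhds ((1 / (Nat.factorial r : ℝ)) * ∏ j : Fin r, ∫ y, g j y ∂ν)) := by
  have haegj : ∀ᵐ y ∂ν, ∀ j : Fin r,
      Tendsto (fun n : ℕ => (∑ i ∈ Finset.range n, g j (T^[i] y)) / n) atTop
        (nhds (∫ y, g j y ∂ν)) :=
    MeasureTheory.ae_all_iff.mpr fun j => MBirk.birkhoff_ae herg (hg j)
  have haeabs : ∀ᵐ y ∂ν, ∀ j : Fin r,
      Tendsto (fun n : ℕ => (∑ i ∈ Finset.range n, |g j (T^[i] y)|) / n) atTop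
        (nhds (∫ y, |g j y| ∂ν)) :=
    MeasureTheory.ae_all_iff.mpr fun j => MBirk.birkhoff_ae herg (hg j).abs
  filter_upwards [haegj, haeabs] with y h1 h2
  have hK : ∀ j : Fin r, ∃ K, ∀ n : ℕ,
      ∑ i ∈ Finset.range n, |g j (T^[i] y)| ≤ K * n :=
    fun j => MBirk.bound_of_cesaro _ (fun i => abs_nonneg _) _ (h2 j)
  have hdet := MBirk.det_multiple r (fun j i => g j (T^[i] y))
    (fun j => ∫ y, g j y ∂ν) h1 hK
  have hval : (∏ j : Fin r, ∫ y, g j y ∂ν) / (Nat.factorial r : ℝ)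
      = (1 / (Nat.factorial r : ℝ)) * ∏ j : Fin r, ∫ y, g j y ∂ν := by ring
  rw [hval] at hdet
  apply hdet.congr
  intro n
  congr 1
  exact (MBirk.sum_strictmono_eq r n (fun j i => g j (T^[i] y))).symm
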